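/- Ping-pong concatenation lemma: Let a group H = ⟨a,b⟩ act on a set X, let X₁, X₂ ⊆ X be disjoint and K₁ ⊆ X₁, K₂ ⊆ X₂ nonempty. For subsets C₁,C₂,D₁,D₂ ⊆ X, say a reduced word w̄ in the free group F₂ on symbols ā, b̄ belongs to W(C₁,C₂,D₁,D₂) if: w(C₁) ⊆ D₂ when w̄ starts with ā and ends with ā; w(C₂) ⊆ D₂ when w̄ starts with ā and ends with b̄; w(C₁) ⊆ D₁ when w̄ starts with b̄ and ends with ā; w(C₂) ⊆ D₁ when w̄ starts with b̄ and ends with b̄ (where w is the evaluation of w̄ in H). Set W_{K→X} = W(K₁,K₂,X₁,X₂) and W_{X→K} = W(X₁,X₂,K₁,K₂). If w̄ = w̄₁⋯w̄ₙ is a decomposition into exact subwords alternating between W_{K→X} and W_{X→K}, then w̄ ∈ W_{K→X}. -/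

import Mathlib

open Pointwise

/-- A word in the free group `F₂` on two generators (`true` ↦ `ā`, `false` ↦ `b̄`),
presented as its list of syllables `(sᵢ, nᵢ)`, is reduced if consecutive syllables use
distinct generators and all exponents are nonzero. -/
def IsReducedWord (w : List (Bool × ℤ)) : Prop :=
  w.Chain' (fun p q => p.1 ≠ q.1) ∧ ∀ p ∈ w, p.2 ≠ 0

/-- The evaluation of a word `w̄ ∈ F₂` in the group `H = ⟨a, b⟩`. -/
def evalW {H : Type*} [Group H] (a b : H) (w : List (Bool × ℤ)) : H :=
  (w.map fun s => (if s.1 then a else b) ^ s.2).prod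

/-- Membership in `W(C₁, C₂, D₁, D₂)`: the reduced word `w̄` satisfies
`w(C₁) ⊆ D₂` if `w̄ ∈ F₂^{a,a}`, `w(C₂) ⊆ D₂` if `w̄ ∈ F₂^{a,b}`,
`w(C₁) ⊆ D₁` if `w̄ ∈ F₂^{b,a}`, and `w(C₂) ⊆ D₁` if `w̄ ∈ F₂^{b,b}`
(the source is governed by the last letter of `w̄`, which acts first, and the
target by its first letter). -/
def memW {H X : Type*} [Group H] [MulAction H X] (a b : H) (C₁ C₂ D₁ D₂ : Set X)
    (w : List (Bool × ℤ)) : Prop :=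
  IsReducedWord w ∧ ∃ h : w ≠ [],
    evalW a b w • (if (w.getLast h).1 then C₁ else C₂) ⊆ (if (w.head h).1 then D₂ else D₁)

theorem IsReducedWord.right {u v : List (Bool × ℤ)} (h : IsReducedWord (u ++ v)) :
    IsReducedWord v :=
  ⟨(List.isChain_append.mp h.1).2.1, fun p hp => h.2 p (List.mem_append_right u hp)⟩

theorem evalW_append {H : Type*} [Group H] (a b : H) (u v : List (Bool × ℤ)) :
    evalW a b (u ++ v) = evalW a b u * evalW a b v := by
  simp [evalW]

theorem memW_mono {H X : Type*} [Group H] [MulAction H X] {a b : H}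
    {C₁ C₂ D₁ D₂ C₁' C₂' D₁' D₂' : Set X} {w : List (Bool × ℤ)}
    (h : memW a b C₁ C₂ D₁ D₂ w) (h₁ : C₁' ⊆ C₁) (h₂ : C₂' ⊆ C₂)
    (h₃ : D₁ ⊆ D₁') (h₄ : D₂ ⊆ D₂') : memW a b C₁' C₂' D₁' D₂' w := by
  obtain ⟨hr, hne, hsub⟩ := h
  refine ⟨hr, hne, ?_⟩
  refine Set.Subset.trans (Set.Subset.trans (Set.smul_set_mono ?_) hsub) ?_
  · split <;> [exact h₁; exact h₂]
  · split <;> [exact h₄; exact h₃]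

theorem memW_append {H X : Type*} [Group H] [MulAction H X] {a b : H}
    {C₁ C₂ D₁ D₂ E₁ E₂ F₁ F₂ : Set X} {u v : List (Bool × ℤ)}
    (hu : memW a b C₁ C₂ D₁ D₂ u) (hv : memW a b E₁ E₂ F₁ F₂ v)
    (h₁ : F₁ ⊆ C₁) (h₂ : F₂ ⊆ C₂) (hred : IsReducedWord (u ++ v)) :
    memW a b E₁ E₂ D₁ D₂ (u ++ v) := by
  obtain ⟨hru, hun, hsu⟩ := hu
  obtain ⟨hrv, hvn, hsv⟩ := hv
  have hne : u ++ v ≠ [] := by simp [hun]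
  refine ⟨hred, hne, ?_⟩
  have hlast : (u ++ v).getLast hne = v.getLast hvn := by
    rw [List.getLast_append]; simp [hvn]
  have hhead : (u ++ v).head hne = u.head hun := by
    rw [List.head_append]; simp [hun]
  have hbd : (u.getLast hun).1 ≠ (v.head hvn).1 := by
    have := (List.isChain_append.mp hred.1).2.2
    exact this (u.getLast hun) (by simp [List.getLast?_eq_getLast hun])
      (v.head hvn) (by simp [List.head?_eq_head hvn])
  rw [hlast, hhead, evalW_append, mul_smul]
  refine Set.Subset.trans (Set.smul_set_mono (Set.Subset.trans hsv ?_)) hsu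
  cases hb : (v.head hvn).1
  · have hl : (u.getLast hun).1 = true := by simpa [hb] using hbd
    rw [hl]; simpa using h₁
  · have hl : (u.getLast hun).1 = false := by simpa [hb] using hbd
    rw [hl]; simpa using h₂

theorem memW_key {H X : Type*} [Group H] [MulAction H X] (a b : H) (K₁ K₂ : Set X) :
    ∀ (ws : List (List (Bool × ℤ))) (S₁ S₂ T₁ T₂ S₁' S₂' T₁' T₂' : Set X),
    K₁ ⊆ S₁ → K₂ ⊆ S₂ → K₁ ⊆ S₁' → K₂ ⊆ S₂' →
    T₁' ⊆ S₁ → T₂' ⊆ S₂ → T₁ ⊆ S₁' → T₂ ⊆ S₂' →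
    ws ≠ [] → IsReducedWord ws.flatten →
    (∀ i : ℕ, ∀ h : i < ws.length,
      (i % 2 = 0 → memW a b S₁ S₂ T₁ T₂ (ws.get ⟨i, h⟩)) ∧
      (i % 2 = 1 → memW a b S₁' S₂' T₁' T₂' (ws.get ⟨i, h⟩))) →
    memW a b K₁ K₂ T₁ T₂ ws.flatten := by
  intro ws
  induction ws with
  | nil => intro _ _ _ _ _ _ _ _ _ _ _ _ _ _ _ _ h; exact absurd rfl h
  | cons u rest ih =>
    intro S₁ S₂ T₁ T₂ S₁' S₂' T₁' T₂' h1 h2 h3 h4 h5 h6 h7 h8 _ hred hidx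
    have hu : memW a b S₁ S₂ T₁ T₂ u := (hidx 0 (by simp)).1 rfl
    cases rest with
    | nil =>
      have he : ([u] : List (List (Bool × ℤ))).flatten = u := by simp
      rw [he]
      exact memW_mono hu h1 h2 subset_rfl subset_rfl
    | cons v rest' =>
      have hflat : (u :: v :: rest').flatten = u ++ (v :: rest').flatten := rfl
      rw [hflat] at hred ⊢
      have hrest : memW a b K₁ K₂ T₁' T₂' (v :: rest').flatten := by
        apply ih S₁' S₂' T₁' T₂' S₁ S₂ T₁ T₂ h3 h4 h1 h2 h7 h8 h5 h6 (by simp) hred.right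
        intro i h
        have h' : i + 1 < (u :: v :: rest').length := by simpa using Nat.succ_lt_succ h
        constructor
        · intro hp
          exact (hidx (i+1) h').2 (by omega)
        · intro hp
          exact (hidx (i+1) h').1 (by omega)
      exact memW_append hu hrest h5 h6 hred

/-- Ping-pong concatenation lemma: with `W_{K→X} = W(K₁,K₂,X₁,X₂)` and
`W_{X→K} = W(X₁,X₂,K₁,K₂)`, if `w̄ = w̄₁⋯w̄ₙ` is a decomposition into exact subwords
alternating between `W_{K→X}` and `W_{X→K}`, then `w̄ ∈ W_{K→X}`. -/
theorem stmt_13 {H X : Type*} [Group H] [MulAction H X] (a b : H)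
    (X₁ X₂ K₁ K₂ : Set X) (hdisj : Disjoint X₁ X₂)
    (hK₁ : K₁.Nonempty) (hK₂ : K₂.Nonempty) (hK₁X : K₁ ⊆ X₁) (hK₂X : K₂ ⊆ X₂)
    (ws : List (List (Bool × ℤ))) (hne : ws ≠ []) (hnonempty : ∀ u ∈ ws, u ≠ [])
    (hred : IsReducedWord ws.flatten)
    (halt :
      (∀ i : ℕ, ∀ h : i < ws.length,
        (i % 2 = 0 → memW a b K₁ K₂ X₁ X₂ (ws.get ⟨i, h⟩)) ∧
        (i % 2 = 1 → memW a b X₁ X₂ K₁ K₂ (ws.get ⟨i, h⟩))) ∨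
      (∀ i : ℕ, ∀ h : i < ws.length,
        (i % 2 = 0 → memW a b X₁ X₂ K₁ K₂ (ws.get ⟨i, h⟩)) ∧
        (i % 2 = 1 → memW a b K₁ K₂ X₁ X₂ (ws.get ⟨i, h⟩)))) :
    memW a b K₁ K₂ X₁ X₂ ws.flatten := by
  rcases halt with h | h
  · exact memW_key a b K₁ K₂ ws K₁ K₂ X₁ X₂ X₁ X₂ K₁ K₂ subset_rfl subset_rfl hK₁X hK₂X
      subset_rfl subset_rfl subset_rfl subset_rfl hne hred h
  · exact memW_mono
      (memW_key a b K₁ K₂ ws X₁ X₂ K₁ K₂ K₁ K₂ X₁ X₂ hK₁X hK₂X subset_rfl subset_rfl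
        subset_rfl subset_rfl subset_rfl subset_rfl hne hred h)
      subset_rfl subset_rfl hK₁X hK₂X
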